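/- A function f : ℝ → X is compact almost automorphic if and only if it is ℤ-almost automorphic and uniformly continuous; i.e., KAA(ℝ; X) = ℤAA(ℝ; X) ∩ UC(ℝ; X). -/

import Mathlib

open Filter Topology

variable {X : Type*} [NormedAddCommGroup X]

/-- `f ∈ PC_ℤ(ℝ; X)`: continuous on each `[n, n+1)`, `n ∈ ℤ`, with a left
limit at each integer. -/
def PCZ (f : ℝ → X) : Prop :=
  (∀ n : ℤ, ContinuousOn f (Set.Ico (n : ℝ) ((n : ℝ) + 1))) ∧
  ∀ n : ℤ, ∃ L : X, Filter.Tendsto f (nhdsWithin (n : ℝ) (Set.Iio (n : ℝ))) (nhds L)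

/-- `f` is ℤ-almost automorphic: `f ∈ PC_ℤ(ℝ;X)` and for every sequence of
integers there are a subsequence and a function `g` with the pointwise
bi-limit property. -/
def ZAA (f : ℝ → X) : Prop :=
  PCZ f ∧ ∀ s : ℕ → ℤ, ∃ (φ : ℕ → ℕ) (g : ℝ → X), StrictMono φ ∧
    (∀ t : ℝ, Filter.Tendsto (fun n => f (t + (s (φ n) : ℝ))) Filter.atTop (nhds (g t))) ∧
    (∀ t : ℝ, Filter.Tendsto (fun n => g (t - (s (φ n) : ℝ))) Filter.atTop (nhds (f t)))

/-- `f : ℝ → X` is compact almost automorphic: continuous, and every real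
sequence has a subsequence along which the translates converge, and the
back-translates converge back, uniformly on compact subsets of ℝ. -/
def KAA (f : ℝ → X) : Prop :=
  Continuous f ∧ ∀ s : ℕ → ℝ, ∃ (φ : ℕ → ℕ) (g : ℝ → X), StrictMono φ ∧
    (∀ K : Set ℝ, IsCompact K →
      TendstoUniformlyOn (fun n t => f (t + s (φ n))) g Filter.atTop K) ∧
    (∀ K : Set ℝ, IsCompact K →
      TendstoUniformlyOn (fun n t => g (t - s (φ n))) f Filter.atTop K)

/-- Characterization: `f` is compact almost automorphic iff `f` is ℤ-almost
automorphic and uniformly continuous, i.e. `KAA(ℝ;X) = ℤAA(ℝ;X) ∩ UC(ℝ;X)`. -/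
lemma aux_unif {F : ℕ → ℝ → X} {g : ℝ → X}
    (hmod : ∀ ε : ℝ, 0 < ε → ∃ δ : ℝ, 0 < δ ∧ ∀ n (x y : ℝ), dist x y < δ → dist (F n x) (F n y) ≤ ε)
    (hpt : ∀ x : ℝ, Tendsto (fun n => F n x) atTop (𝓝 (g x)))
    {K : Set ℝ} (hK : IsCompact K) :
    TendstoUniformlyOn F g atTop K := by
  rw [Metric.tendstoUniformlyOn_iff]
  intro ε hε
  obtain ⟨δ, hδ, hm⟩ := hmod (ε/4) (by positivity)
  have hglip : ∀ x y : ℝ, dist x y < δ → dist (g x) (g y) ≤ ε/4 := by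
    intro x y hxy
    exact le_of_tendsto ((hpt x).dist (hpt y)) (Eventually.of_forall fun n => hm n x y hxy)
  obtain ⟨t, htK, hcov⟩ := hK.elim_nhds_subcover (fun c => Metric.ball c δ)
    (fun x _ => Metric.ball_mem_nhds x hδ)
  have hev : ∀ᶠ n in atTop, ∀ c ∈ t, dist (F n c) (g c) < ε/4 := by
    rw [eventually_all_finset]
    intro c _
    exact ((hpt c).eventually (Metric.ball_mem_nhds _ (by positivity : (0:ℝ) < ε/4))).mono
      (fun n h => by simpa [Metric.mem_ball] using h)
  filter_upwards [hev] with n hn x hx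
  obtain ⟨c, hct, hxc⟩ := Set.mem_iUnion₂.1 (hcov hx)
  rw [Metric.mem_ball] at hxc
  have h1 : dist (g x) (g c) ≤ ε/4 := hglip x c hxc
  have h2 : dist (g c) (F n c) < ε/4 := by rw [dist_comm]; exact hn c hct
  have h3 : dist (F n c) (F n x) ≤ ε/4 := hm n c x (by rw [dist_comm]; exact hxc)
  calc dist (g x) (F n x) ≤ dist (g x) (g c) + dist (g c) (F n c) + dist (F n c) (F n x) :=
        dist_triangle4 _ _ _ _
    _ < ε := by linarith

lemma fwd_uc (f : ℝ → X) (hcont : Continuous f)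
    (hK : ∀ s : ℕ → ℝ, ∃ (φ : ℕ → ℕ) (g : ℝ → X), StrictMono φ ∧
    (∀ K : Set ℝ, IsCompact K →
      TendstoUniformlyOn (fun n t => f (t + s (φ n))) g Filter.atTop K) ∧
    (∀ K : Set ℝ, IsCompact K →
      TendstoUniformlyOn (fun n t => g (t - s (φ n))) f Filter.atTop K)) :
    UniformContinuous f := by
  rw [Metric.uniformContinuous_iff]
  by_contra hcon
  push_neg at hcon
  obtain ⟨ε, hε, hd⟩ := hcon
  choose a b hab hfab using fun n : ℕ => hd (1/((n:ℝ)+1)) (by positivity)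
  obtain ⟨φ, g, hφ, h1, h2⟩ := hK a
  set K : Set ℝ := Metric.closedBall 0 1 with hKdef
  have hKc : IsCompact K := isCompact_closedBall 0 1
  have hg1 := h1 K hKc
  set u : ℕ → ℝ := fun n => b (φ n) - a (φ n) with hu
  have huK : ∀ n, u n ∈ K := by
    intro n
    have h := hab (φ n)
    rw [Real.dist_eq] at h
    have h1' : (1:ℝ)/((φ n : ℝ)+1) ≤ 1 := by
      rw [div_le_one (by positivity)]
      have : (0:ℝ) ≤ (φ n : ℝ) := Nat.cast_nonneg _
      linarith
    simp only [hKdef, Metric.mem_closedBall, Real.dist_eq, hu, sub_zero]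
    rw [abs_sub_comm]
    linarith
  have hu0 : Tendsto u atTop (𝓝 0) := by
    rw [Metric.tendsto_atTop]
    intro ε' hε'
    obtain ⟨N, hN⟩ := exists_nat_one_div_lt hε'
    refine ⟨N, fun n hn => ?_⟩
    have h := hab (φ n)
    rw [Real.dist_eq] at h
    have hφn : (N:ℝ) ≤ (φ n : ℝ) := by
      exact_mod_cast le_trans hn (hφ.le_apply)
    have : (1:ℝ)/((φ n : ℝ)+1) ≤ 1/((N:ℝ)+1) := by
      apply one_div_le_one_div_of_le (by positivity); linarith
    simp only [Real.dist_eq, hu, sub_zero]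
    rw [abs_sub_comm]
    calc |a (φ n) - b (φ n)| < 1/((φ n : ℝ)+1) := h
      _ ≤ 1/((N:ℝ)+1) := this
      _ < ε' := hN
  have hgc : ContinuousOn g K := by
    apply hg1.continuousOn
    refine Frequently.of_forall fun n => ?_
    exact (hcont.comp (continuous_id.add continuous_const)).continuousOn
  have hgu : Tendsto (fun n => g (u n)) atTop (𝓝 (g 0)) := by
    have h0K : (0:ℝ) ∈ K := by simp [hKdef]
    have := (hgc 0 h0K).tendsto
    exact this.comp (tendsto_nhdsWithin_of_tendsto_nhds_of_eventually_within u hu0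
      (Eventually.of_forall huK))
  rw [Metric.tendstoUniformlyOn_iff] at hg1
  have E1 := hg1 (ε/3) (by positivity)
  have E2 := hgu.eventually (Metric.ball_mem_nhds (g 0) (by positivity : (0:ℝ) < ε/3))
  obtain ⟨n, hn1, hn2⟩ := (E1.and E2).exists
  have h0K : (0:ℝ) ∈ K := by simp [hKdef]
  have hA : dist (g 0) (f (0 + a (φ n))) < ε/3 := hn1 0 h0K
  have hB : dist (g (u n)) (f (u n + a (φ n))) < ε/3 := hn1 (u n) (huK n)
  have heq1 : u n + a (φ n) = b (φ n) := by simp [hu]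
  have heq2 : (0:ℝ) + a (φ n) = a (φ n) := by ring
  rw [heq1] at hB
  rw [heq2] at hA
  have := hfab (φ n)
  have : ε ≤ dist (f (a (φ n))) (f (b (φ n))) := this
  have htri : dist (f (a (φ n))) (f (b (φ n))) ≤
      dist (f (a (φ n))) (g 0) + dist (g 0) (g (u n)) + dist (g (u n)) (f (b (φ n))) :=
    dist_triangle4 _ _ _ _
  rw [dist_comm (f (a (φ n))) (g 0)] at htri
  rw [dist_comm (g (u n)) (g 0)] at hn2
  linarith

lemma bwd_main (f : ℝ → X) (hUC : UniformContinuous f)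
    (hZ : ∀ s : ℕ → ℤ, ∃ (φ : ℕ → ℕ) (g : ℝ → X), StrictMono φ ∧
    (∀ t : ℝ, Filter.Tendsto (fun n => f (t + (s (φ n) : ℝ))) Filter.atTop (nhds (g t))) ∧
    (∀ t : ℝ, Filter.Tendsto (fun n => g (t - (s (φ n) : ℝ))) Filter.atTop (nhds (f t))))
    (s : ℕ → ℝ) :
    ∃ (φ : ℕ → ℕ) (g : ℝ → X), StrictMono φ ∧
    (∀ K : Set ℝ, IsCompact K →
      TendstoUniformlyOn (fun n t => f (t + s (φ n))) g Filter.atTop K) ∧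
    (∀ K : Set ℝ, IsCompact K →
      TendstoUniformlyOn (fun n t => g (t - s (φ n))) f Filter.atTop K) := by
  set k : ℕ → ℤ := fun n => ⌊s n⌋ with hk
  set r : ℕ → ℝ := fun n => Int.fract (s n) with hr
  have hsk : ∀ m, (k m : ℝ) + r m = s m := fun m => Int.floor_add_fract (s m)
  have hrIcc : ∀ n, r n ∈ Set.Icc (0:ℝ) 1 :=
    fun n => ⟨Int.fract_nonneg (s n), (Int.fract_lt_one (s n)).le⟩
  obtain ⟨rlim, _, ψ, hψ, hrconv⟩ := (isCompact_Icc (a := (0:ℝ)) (b := 1)).tendsto_subseq hrIcc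
  obtain ⟨φ, g, hφ, hg1, hg2⟩ := hZ (fun n => k (ψ n))
  set σ : ℕ → ℕ := ψ ∘ φ with hσ
  set h : ℝ → X := fun t => g (t + rlim) with hh
  have hrσ : Tendsto (fun n => r (σ n)) atTop (𝓝 rlim) := hrconv.comp hφ.tendsto_atTop
  -- moduli
  have hmodf : ∀ ε : ℝ, 0 < ε → ∃ δ : ℝ, 0 < δ ∧ ∀ x y : ℝ, dist x y < δ → dist (f x) (f y) ≤ ε := by
    intro ε hε
    obtain ⟨δ, hδ, hi⟩ := Metric.uniformContinuous_iff.1 hUC ε hε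
    exact ⟨δ, hδ, fun x y hxy => (hi hxy).le⟩
  have hmodg : ∀ ε : ℝ, 0 < ε → ∃ δ : ℝ, 0 < δ ∧ ∀ x y : ℝ, dist x y < δ → dist (g x) (g y) ≤ ε := by
    intro ε hε
    obtain ⟨δ, hδ, hi⟩ := hmodf ε hε
    refine ⟨δ, hδ, fun x y hxy => ?_⟩
    refine le_of_tendsto ((hg1 x).dist (hg1 y)) (Eventually.of_forall fun n => ?_)
    exact hi _ _ (by rwa [dist_add_right])
  -- pointwise limits
  have P1 : ∀ t : ℝ, Tendsto (fun n => f (t + s (σ n))) atTop (𝓝 (h t)) := by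
    intro t
    rw [Metric.tendsto_atTop]
    intro ε hε
    obtain ⟨δ, hδ, hfm⟩ := hmodf (ε/3) (by positivity)
    have E1 : ∀ᶠ n in atTop, dist (r (σ n)) rlim < δ :=
      (hrσ.eventually (Metric.ball_mem_nhds rlim hδ)).mono (fun n hn => by simpa using hn)
    have E2 := (hg1 (t + rlim)).eventually
      (Metric.ball_mem_nhds (g (t + rlim)) (by positivity : (0:ℝ) < ε/3))
    obtain ⟨N, hN⟩ := (E1.and E2).exists_forall_of_atTop
    refine ⟨N, fun n hn => ?_⟩
    obtain ⟨hn1, hn2⟩ := hN n hn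
    have heq : t + s (σ n) = (t + r (σ n)) + (k (σ n) : ℝ) := by rw [← hsk (σ n)]; ring
    have hd1 : dist (f (t + s (σ n))) (f ((t + rlim) + (k (σ n) : ℝ))) ≤ ε/3 := by
      rw [heq]
      apply hfm
      rw [dist_add_right, dist_add_left]
      exact hn1
    have hd2 : dist (f ((t + rlim) + (k (σ n) : ℝ))) (h t) < ε/3 := hn2
    calc dist (f (t + s (σ n))) (h t)
        ≤ dist (f (t + s (σ n))) (f ((t + rlim) + (k (σ n) : ℝ)))
          + dist (f ((t + rlim) + (k (σ n) : ℝ))) (h t) := dist_triangle _ _ _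
      _ < ε := by linarith
  have P3 : ∀ t : ℝ, Tendsto (fun n => h (t - s (σ n))) atTop (𝓝 (f t)) := by
    intro t
    rw [Metric.tendsto_atTop]
    intro ε hε
    obtain ⟨δ, hδ, hgm⟩ := hmodg (ε/3) (by positivity)
    have E1 : ∀ᶠ n in atTop, dist (r (σ n)) rlim < δ :=
      (hrσ.eventually (Metric.ball_mem_nhds rlim hδ)).mono (fun n hn => by simpa using hn)
    have E2 := (hg2 t).eventually (Metric.ball_mem_nhds (f t) (by positivity : (0:ℝ) < ε/3))
    obtain ⟨N, hN⟩ := (E1.and E2).exists_forall_of_atTop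
    refine ⟨N, fun n hn => ?_⟩
    obtain ⟨hn1, hn2⟩ := hN n hn
    have heq : t - s (σ n) + rlim = (t + (rlim - r (σ n))) - (k (σ n) : ℝ) := by
      rw [← hsk (σ n)]; ring
    have hd1 : dist (h (t - s (σ n))) (g (t - (k (σ n) : ℝ))) ≤ ε/3 := by
      show dist (g (t - s (σ n) + rlim)) (g (t - (k (σ n) : ℝ))) ≤ ε/3
      rw [heq]
      apply hgm
      have : (t + (rlim - r (σ n))) - (k (σ n) : ℝ) - (t - (k (σ n) : ℝ)) = rlim - r (σ n) := by ring
      rw [Real.dist_eq, this, abs_sub_comm]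
      rw [Real.dist_eq] at hn1
      exact hn1
    have hn2' : dist (g (t - (k (σ n) : ℝ))) (f t) < ε/3 := hn2
    calc dist (h (t - s (σ n))) (f t)
        ≤ dist (h (t - s (σ n))) (g (t - (k (σ n) : ℝ))) + dist (g (t - (k (σ n) : ℝ))) (f t) :=
          dist_triangle _ _ _
      _ < ε := by linarith
  refine ⟨σ, h, hψ.comp hφ, ?_, ?_⟩
  · intro K hKc
    refine aux_unif ?_ P1 hKc
    intro ε hε
    obtain ⟨δ, hδ, hfm⟩ := hmodf ε hε
    exact ⟨δ, hδ, fun n x y hxy => hfm _ _ (by rwa [dist_add_right])⟩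
  · intro K hKc
    refine aux_unif ?_ P3 hKc
    intro ε hε
    obtain ⟨δ, hδ, hgm⟩ := hmodg ε hε
    refine ⟨δ, hδ, fun n x y hxy => ?_⟩
    show dist (g (x - s (σ n) + rlim)) (g (y - s (σ n) + rlim)) ≤ ε
    apply hgm
    have : (x - s (σ n) + rlim) - (y - s (σ n) + rlim) = x - y := by ring
    rw [Real.dist_eq, this]
    rw [Real.dist_eq] at hxy
    exact hxy


theorem stmt8 (f : ℝ → X) : KAA f ↔ ZAA f ∧ UniformContinuous f := by
  constructor
  · rintro ⟨hcont, hK⟩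
    have hUC : UniformContinuous f := fwd_uc f hcont hK
    refine ⟨⟨⟨fun n => hcont.continuousOn, fun n =>
      ⟨f n, (hcont.tendsto _).mono_left nhdsWithin_le_nhds⟩⟩, ?_⟩, hUC⟩
    intro s
    obtain ⟨φ, g, hφ, h1, h2⟩ := hK (fun n => (s n : ℝ))
    exact ⟨φ, g, hφ,
      fun t => (h1 {t} isCompact_singleton).tendsto_at (Set.mem_singleton t),
      fun t => (h2 {t} isCompact_singleton).tendsto_at (Set.mem_singleton t)⟩
  · rintro ⟨⟨hPC, hZ⟩, hUC⟩
    exact ⟨hUC.continuous, bwd_main f hUC hZ⟩
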